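/- arXiv:0810.2393 — 5 statements merged into one kernel-verified Lean document; each statement's English description precedes it below -/
import Mathlib

section
/- Let (V, d) be a ℤ/2-graded dg vector space over a field k of characteristic zero, let B be a bilinear form on V compatible with d, and let (t, s) be an almost Hodge decomposition of (V, d, B). Then the operator A := d∘s + s∘d satisfies A∘t = t∘A = 0, so A restricts to an automorphism of ker t, and one may define the Green operator G : V → V to be the inverse of A on ker t and 0 on im t. The operator G commutes with d (G∘d = d∘G), satisfies G∘t = t∘G = 0 and G∘s = s∘G, the identity (s∘G)∘d + d∘(s∘G) = 1 − t holds, and the pair (t, s∘G) is a genuine Hodge decomposition of (V, d, B). -/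
/-- An almost Hodge decomposition `(t, s)` (conditions (1),(2),(4),(5),
(6),(7), with `d∘s + s∘d + t` invertible) may be corrected to a genuine Hodge
decomposition: `A := d∘s + s∘d` satisfies `A∘t = t∘A = 0`, so it restricts to an
automorphism of `ker t`; the Green operator `G` (inverse of `A` on `ker t`, zero on
`im t`) commutes with `d`, satisfies `G∘t = t∘G = 0`, `G∘s = s∘G`,
`(s∘G)∘d + d∘(s∘G) = 1 − t`, and `(t, s∘G)` is a genuine Hodge decomposition. -/
theorem almost_hodge_decomposition_correction
    {k V : Type*} [Field k] [CharZero k] [AddCommGroup V] [Module k V]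
    -- ℤ/2-grading: V = V₀ ⊕ V₁
    (V0 V1 : Submodule k V) (hgr : IsCompl V0 V1)
    -- the differential: odd, square zero
    (d : V →ₗ[k] V) (hd2 : d ∘ₗ d = 0)
    (hd01 : ∀ x ∈ V0, d x ∈ V1) (hd10 : ∀ x ∈ V1, d x ∈ V0)
    -- bilinear form compatible with d
    (B : V →ₗ[k] V →ₗ[k] k)
    (hBd0 : ∀ x ∈ V0, ∀ y, B (d x) y + B x (d y) = 0)
    (hBd1 : ∀ x ∈ V1, ∀ y, B (d x) y - B x (d y) = 0)
    -- almost Hodge decomposition (t, s): t even, s odd,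
    -- conditions (1), (2), (4), (5), (6), (7), and d∘s + s∘d + t invertible
    (t s : V →ₗ[k] V)
    (ht0 : ∀ x ∈ V0, t x ∈ V0) (ht1 : ∀ x ∈ V1, t x ∈ V1)
    (hs01 : ∀ x ∈ V0, s x ∈ V1) (hs10 : ∀ x ∈ V1, s x ∈ V0)
    (h1 : s ∘ₗ s = 0)
    (h2a : ∀ x ∈ V0, ∀ y, B (s x) y = B x (s y))
    (h2b : ∀ x ∈ V1, ∀ y, B (s x) y = - B x (s y))
    (h4 : d ∘ₗ t = t ∘ₗ d)
    (h5 : ∀ x y, B (t x) y = B x (t y))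
    (h6 : t ∘ₗ t = t)
    (h7a : s ∘ₗ t = 0) (h7b : t ∘ₗ s = 0)
    (hinv : IsUnit (d ∘ₗ s + s ∘ₗ d + t : Module.End k V)) :
    -- A := d∘s + s∘d annihilates and is annihilated by t, hence restricts to ker t
    (d ∘ₗ s + s ∘ₗ d) ∘ₗ t = 0 ∧ t ∘ₗ (d ∘ₗ s + s ∘ₗ d) = 0 ∧
    (∀ x ∈ LinearMap.ker t, (d ∘ₗ s + s ∘ₗ d) x ∈ LinearMap.ker t) ∧
    -- the Green operator G exists
    ∃ G : V →ₗ[k] V,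
      -- G is inverse to A on ker t (so A restricts to an automorphism of ker t)
      (∀ x ∈ LinearMap.ker t, G x ∈ LinearMap.ker t) ∧
      (∀ x ∈ LinearMap.ker t, (d ∘ₗ s + s ∘ₗ d) (G x) = x) ∧
      (∀ x ∈ LinearMap.ker t, G ((d ∘ₗ s + s ∘ₗ d) x) = x) ∧
      -- G is zero on im t
      (∀ x ∈ LinearMap.range t, G x = 0) ∧
      -- G commutes with d, kills t, commutes with s
      G ∘ₗ d = d ∘ₗ G ∧ G ∘ₗ t = 0 ∧ t ∘ₗ G = 0 ∧ G ∘ₗ s = s ∘ₗ G ∧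
      -- the corrected homotopy identity
      (s ∘ₗ G) ∘ₗ d + d ∘ₗ (s ∘ₗ G) = LinearMap.id - t ∧
      -- (t, s∘G) is a genuine Hodge decomposition: s∘G is odd and
      -- conditions (1)-(7) hold with s replaced by s∘G
      (∀ x ∈ V0, (s ∘ₗ G) x ∈ V1) ∧ (∀ x ∈ V1, (s ∘ₗ G) x ∈ V0) ∧
      (s ∘ₗ G) ∘ₗ (s ∘ₗ G) = 0 ∧
      (∀ x ∈ V0, ∀ y, B ((s ∘ₗ G) x) y = B x ((s ∘ₗ G) y)) ∧
      (∀ x ∈ V1, ∀ y, B ((s ∘ₗ G) x) y = - B x ((s ∘ₗ G) y)) ∧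
      d ∘ₗ t = t ∘ₗ d ∧
      (∀ x y, B (t x) y = B x (t y)) ∧
      t ∘ₗ t = t ∧
      (s ∘ₗ G) ∘ₗ t = 0 ∧ t ∘ₗ (s ∘ₗ G) = 0 := by
  classical
  have hd2' : d * d = 0 := hd2
  have hs2 : s * s = 0 := h1
  have h4' : d * t = t * d := h4
  have h6' : t * t = t := h6
  have h7a' : s * t = 0 := h7a
  have h7b' : t * s = 0 := h7b
  set A : Module.End k V := d ∘ₗ s + s ∘ₗ d with hAdef
  have hAmul : A = d * s + s * d := rfl
  have hAt : A * t = 0 := by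
    rw [hAmul, add_mul, mul_assoc, h7a', mul_zero, zero_add, mul_assoc, h4',
      ← mul_assoc, h7a', zero_mul]
  have htA : t * A = 0 := by
    rw [hAmul, mul_add, ← mul_assoc, ← h4', mul_assoc, h7b', mul_zero, zero_add,
      ← mul_assoc, h7b', zero_mul]
  obtain ⟨u, hu⟩ := hinv
  have hu' : (↑u : Module.End k V) = A + t := hu
  have hUt : (↑u : Module.End k V) * t = t := by rw [hu', add_mul, hAt, zero_add, h6']
  have htU : t * (↑u : Module.End k V) = t := by rw [hu', mul_add, htA, zero_add, h6']
  have hiut : (↑u⁻¹ : Module.End k V) * t = t := by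
    conv_lhs => rw [← hUt, ← mul_assoc, u.inv_mul, one_mul]
  have htiu : t * (↑u⁻¹ : Module.End k V) = t := by
    conv_lhs => rw [← htU, mul_assoc, u.mul_inv, mul_one]
  set G : Module.End k V := ↑u⁻¹ - t with hGdef
  have hGt : G * t = 0 := by rw [hGdef, sub_mul, hiut, h6', sub_self]
  have htG : t * G = 0 := by rw [hGdef, mul_sub, htiu, h6', sub_self]
  have hAu : A = ↑u - t := by rw [hu', add_sub_cancel_right]
  have hAG : A * G = 1 - t := by
    rw [hAu, hGdef, sub_mul, mul_sub, mul_sub, u.mul_inv, hUt, htiu, h6']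
    abel
  have hGA : G * A = 1 - t := by
    rw [hAu, hGdef, sub_mul, mul_sub, mul_sub, u.inv_mul, hiut, htU, h6']
    abel
  -- commutation with d
  have hdA : d * A = A * d := by
    rw [hAmul, mul_add, add_mul, ← mul_assoc, ← mul_assoc, hd2', zero_mul, zero_add,
      mul_assoc, mul_assoc, hd2', mul_zero, add_zero]
  have hdU : Commute d (↑u : Module.End k V) := by
    unfold Commute SemiconjBy
    rw [hu', mul_add, add_mul, hdA, h4']
  have hdiu : d * (↑u⁻¹ : Module.End k V) = ↑u⁻¹ * d := hdU.units_inv_right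
  have hdG : d * G = G * d := by rw [hGdef, mul_sub, sub_mul, hdiu, h4']
  -- commutation with s
  have hsA : s * A = A * s := by
    rw [hAmul, mul_add, add_mul, ← mul_assoc, ← mul_assoc, hs2, zero_mul, add_zero,
      mul_assoc, mul_assoc, hs2, mul_zero, zero_add]
  have hsU : Commute s (↑u : Module.End k V) := by
    unfold Commute SemiconjBy
    rw [hu', mul_add, add_mul, hsA, h7a', h7b']
  have hsiu : s * (↑u⁻¹ : Module.End k V) = ↑u⁻¹ * s := hsU.units_inv_right
  have hsG : s * G = G * s := by rw [hGdef, mul_sub, sub_mul, hsiu, h7a', h7b']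
  -- decomposition of V
  have hdecomp : ∀ x : V, ∃ a ∈ V0, ∃ b ∈ V1, a + b = x := by
    intro x
    have hx : x ∈ V0 ⊔ V1 := by rw [hgr.sup_eq_top]; trivial
    exact Submodule.mem_sup.mp hx
  -- parity
  have hA0 : ∀ x ∈ V0, A x ∈ V0 := by
    intro x hx
    have : A x = d (s x) + s (d x) := rfl
    rw [this]
    exact V0.add_mem (hd10 _ (hs01 _ hx)) (hs10 _ (hd01 _ hx))
  have hA1 : ∀ x ∈ V1, A x ∈ V1 := by
    intro x hx
    have : A x = d (s x) + s (d x) := rfl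
    rw [this]
    exact V1.add_mem (hd01 _ (hs10 _ hx)) (hs01 _ (hd10 _ hx))
  have hU0 : ∀ x ∈ V0, (↑u : Module.End k V) x ∈ V0 := by
    intro x hx
    have : (↑u : Module.End k V) x = A x + t x := by rw [hu']; rfl
    rw [this]; exact V0.add_mem (hA0 _ hx) (ht0 _ hx)
  have hU1 : ∀ x ∈ V1, (↑u : Module.End k V) x ∈ V1 := by
    intro x hx
    have : (↑u : Module.End k V) x = A x + t x := by rw [hu']; rfl
    rw [this]; exact V1.add_mem (hA1 _ hx) (ht1 _ hx)
  have huinj : ∀ z : V, (↑u : Module.End k V) z = 0 → z = 0 := by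
    intro z hz
    have : (↑u⁻¹ : Module.End k V) ((↑u : Module.End k V) z) = z := by
      rw [← Module.End.mul_apply, u.inv_mul]; rfl
    rw [hz, map_zero] at this; exact this.symm
  have hiu0 : ∀ y ∈ V0, (↑u⁻¹ : Module.End k V) y ∈ V0 := by
    intro y hy
    obtain ⟨a, ha, b, hb, hab⟩ := hdecomp ((↑u⁻¹ : Module.End k V) y)
    have huy : (↑u : Module.End k V) ((↑u⁻¹ : Module.End k V) y) = y := by
      rw [← Module.End.mul_apply, u.mul_inv]; rfl
    have hb0 : (↑u : Module.End k V) b ∈ V0 := by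
      have : (↑u : Module.End k V) b = y - (↑u : Module.End k V) a := by
        rw [← huy, ← hab, map_add]; abel
      rw [this]; exact V0.sub_mem hy (hU0 _ ha)
    have hbz : b = 0 := huinj b (by
      have := hgr.disjoint
      exact (Submodule.disjoint_def.mp this) _ hb0 (hU1 _ hb))
    rw [← hab, hbz, add_zero]; exact ha
  have hiu1 : ∀ y ∈ V1, (↑u⁻¹ : Module.End k V) y ∈ V1 := by
    intro y hy
    obtain ⟨a, ha, b, hb, hab⟩ := hdecomp ((↑u⁻¹ : Module.End k V) y)
    have huy : (↑u : Module.End k V) ((↑u⁻¹ : Module.End k V) y) = y := by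
      rw [← Module.End.mul_apply, u.mul_inv]; rfl
    have ha1 : (↑u : Module.End k V) a ∈ V1 := by
      have : (↑u : Module.End k V) a = y - (↑u : Module.End k V) b := by
        rw [← huy, ← hab, map_add]; abel
      rw [this]; exact V1.sub_mem hy (hU1 _ hb)
    have haz : a = 0 := huinj a (by
      have := hgr.disjoint
      exact (Submodule.disjoint_def.mp this) _ (hU0 _ ha) ha1)
    rw [← hab, haz, zero_add]; exact hb
  have hG0 : ∀ x ∈ V0, G x ∈ V0 := by
    intro x hx
    have : G x = (↑u⁻¹ : Module.End k V) x - t x := rfl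
    rw [this]; exact V0.sub_mem (hiu0 _ hx) (ht0 _ hx)
  have hG1 : ∀ x ∈ V1, G x ∈ V1 := by
    intro x hx
    have : G x = (↑u⁻¹ : Module.End k V) x - t x := rfl
    rw [this]; exact V1.sub_mem (hiu1 _ hx) (ht1 _ hx)
  -- symmetry of A
  have hAsym : ∀ x y, B (A x) y = B x (A y) := by
    have h0 : ∀ x ∈ V0, ∀ y, B (A x) y = B x (A y) := by
      intro x hx y
      have hAx : A x = d (s x) + s (d x) := rfl
      have hAy : A y = d (s y) + s (d y) := rfl
      have e1 : B (d (s x)) y = B (s x) (d y) := by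
        have := hBd1 (s x) (hs01 _ hx) y; linear_combination this
      have e2 : B (s x) (d y) = B x (s (d y)) := h2a x hx (d y)
      have e3 : B (s (d x)) y = - B (d x) (s y) := h2b (d x) (hd01 _ hx) y
      have e4 : B (d x) (s y) = - B x (d (s y)) := by
        have := hBd0 x hx (s y); linear_combination this
      rw [hAx, hAy, map_add, LinearMap.add_apply, map_add, e1, e2, e3, e4]
      ring
    have h1' : ∀ x ∈ V1, ∀ y, B (A x) y = B x (A y) := by
      intro x hx y
      have hAx : A x = d (s x) + s (d x) := rfl
      have hAy : A y = d (s y) + s (d y) := rfl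
      have e1 : B (d (s x)) y = - B (s x) (d y) := by
        have := hBd0 (s x) (hs10 _ hx) y; linear_combination this
      have e2 : B (s x) (d y) = - B x (s (d y)) := h2b x hx (d y)
      have e3 : B (s (d x)) y = B (d x) (s y) := h2a (d x) (hd10 _ hx) y
      have e4 : B (d x) (s y) = B x (d (s y)) := by
        have := hBd1 x hx (s y); linear_combination this
      rw [hAx, hAy, map_add, LinearMap.add_apply, map_add, e1, e2, e3, e4]
      ring
    intro x y
    obtain ⟨a, ha, b, hb, hab⟩ := hdecomp x
    calc B (A x) y = B (A a + A b) y := by rw [← hab, map_add A a b]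
      _ = B (A a) y + B (A b) y := by rw [map_add B (A a) (A b), LinearMap.add_apply]
      _ = B a (A y) + B b (A y) := by rw [h0 a ha y, h1' b hb y]
      _ = B (a + b) (A y) := by
          have h := LinearMap.congr_fun (map_add B a b) (A y)
          rw [LinearMap.add_apply] at h
          exact h.symm
      _ = B x (A y) := by rw [hab]
  have hUsym : ∀ x y, B ((↑u : Module.End k V) x) y = B x ((↑u : Module.End k V) y) := by
    intro x y
    have hx : (↑u : Module.End k V) x = A x + t x := by rw [hu']; rfl
    have hy : (↑u : Module.End k V) y = A y + t y := by rw [hu']; rfl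
    rw [hx, hy, map_add, LinearMap.add_apply, map_add, hAsym, h5]
  have hiUsym : ∀ x y, B ((↑u⁻¹ : Module.End k V) x) y
      = B x ((↑u⁻¹ : Module.End k V) y) := by
    intro x y
    have hy : (↑u : Module.End k V) ((↑u⁻¹ : Module.End k V) y) = y := by
      rw [← Module.End.mul_apply, u.mul_inv]; rfl
    have hx : (↑u : Module.End k V) ((↑u⁻¹ : Module.End k V) x) = x := by
      rw [← Module.End.mul_apply, u.mul_inv]; rfl
    calc B ((↑u⁻¹ : Module.End k V) x) y
        = B ((↑u⁻¹ : Module.End k V) x) ((↑u : Module.End k V) ((↑u⁻¹ : Module.End k V) y)) := by rw [hy]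
      _ = B ((↑u : Module.End k V) ((↑u⁻¹ : Module.End k V) x)) ((↑u⁻¹ : Module.End k V) y) := (hUsym _ _).symm
      _ = B x ((↑u⁻¹ : Module.End k V) y) := by rw [hx]
  have hGsym : ∀ x y, B (G x) y = B x (G y) := by
    intro x y
    have hgx : G x = (↑u⁻¹ : Module.End k V) x - t x := rfl
    have hgy : G y = (↑u⁻¹ : Module.End k V) y - t y := rfl
    rw [hgx, hgy, map_sub, LinearMap.sub_apply, map_sub, hiUsym, h5]
  -- now the goals
  refine ⟨hAt, htA, ?_, G, ?_, ?_, ?_, ?_, hdG.symm, hGt, htG, hsG.symm, ?_, ?_, ?_, ?_, ?_, ?_,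
    h4, h5, h6, ?_, ?_⟩
  · intro x hx
    simp only [LinearMap.mem_ker] at *
    have : t (A x) = (t * A) x := rfl
    rw [this, htA]; rfl
  · intro x hx
    simp only [LinearMap.mem_ker] at *
    have : t (G x) = (t * G) x := rfl
    rw [this, htG]; rfl
  · intro x hx
    simp only [LinearMap.mem_ker] at hx
    have : A (G x) = (A * G) x := rfl
    rw [this, hAG]
    simp [hx]
  · intro x hx
    simp only [LinearMap.mem_ker] at hx
    have : G (A x) = (G * A) x := rfl
    rw [this, hGA]
    simp [hx]
  · rintro x ⟨y, rfl⟩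
    have : G (t y) = (G * t) y := rfl
    rw [this, hGt]; rfl
  · -- homotopy identity
    have e : (s * G) * d = s * (d * G) := by rw [mul_assoc, ← hdG]
    have key : (s * G) * d + d * (s * G) = 1 - t := by
      rw [e, ← hAG, hAmul, add_mul, mul_assoc d s G, mul_assoc s d G, add_comm]
    exact key
  · intro x hx
    exact hs01 _ (hG0 _ hx)
  · intro x hx
    exact hs10 _ (hG1 _ hx)
  · have : (s * G) * (s * G) = 0 := by
      rw [mul_assoc, ← mul_assoc G s G, ← hsG, mul_assoc, ← mul_assoc, hs2, zero_mul]
    exact this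
  · intro x hx y
    have e1 : (s ∘ₗ G) x = s (G x) := rfl
    have e2 : (s ∘ₗ G) y = s (G y) := rfl
    rw [e1, e2, h2a (G x) (hG0 _ hx) y, hGsym]
    congr 1
    have : G (s y) = (G * s) y := rfl
    rw [this, ← hsG]; rfl
  · intro x hx y
    have e1 : (s ∘ₗ G) x = s (G x) := rfl
    have e2 : (s ∘ₗ G) y = s (G y) := rfl
    rw [e1, e2, h2b (G x) (hG1 _ hx) y, hGsym]
    congr 2
    have : G (s y) = (G * s) y := rfl
    rw [this, ← hsG]; rfl
  · have : (s * G) * t = 0 := by rw [mul_assoc, hGt, mul_zero]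
    exact this
  · have : t * (s * G) = 0 := by rw [← mul_assoc, h7b', zero_mul]
    exact this
end

section
/- Let (V, d) be a ℤ/2-graded dg vector space over a field k of characteristic zero, let B be a bilinear form on V compatible with d, and let (t, s) be a harmonious Hodge decomposition of (V, d, B). Then V is the internal direct sum im d ⊕ im s ⊕ im t; the subspace im t is orthogonal to im d ⊕ im s with respect to B; the subspace im s is isotropic (B(s x, s y) = 0 for all x, y); and ker d = im d ⊕ im t, so that im t carries the homology of (V, d). -/
/-- A harmonious Hodge decomposition `(t, s)` of `(V, d, B)` yields the
three-term internal direct sum `V = im d ⊕ im s ⊕ im t` with `im t` orthogonal to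
`im d ⊕ im s`, `im s` isotropic, and `ker d = im d ⊕ im t`. -/
theorem harmonious_hodge_three_term_decomposition
    {k V : Type*} [Field k] [CharZero k] [AddCommGroup V] [Module k V]
    -- ℤ/2-grading: V = V₀ ⊕ V₁
    (V0 V1 : Submodule k V) (hgr : IsCompl V0 V1)
    -- the differential: odd, square zero
    (d : V →ₗ[k] V) (hd2 : d ∘ₗ d = 0)
    (hd01 : ∀ x ∈ V0, d x ∈ V1) (hd10 : ∀ x ∈ V1, d x ∈ V0)
    -- bilinear form compatible with d
    (B : V →ₗ[k] V →ₗ[k] k)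
    (hBd0 : ∀ x ∈ V0, ∀ y, B (d x) y + B x (d y) = 0)
    (hBd1 : ∀ x ∈ V1, ∀ y, B (d x) y - B x (d y) = 0)
    -- harmonious Hodge decomposition (t, s): t even, s odd
    (t s : V →ₗ[k] V)
    (ht0 : ∀ x ∈ V0, t x ∈ V0) (ht1 : ∀ x ∈ V1, t x ∈ V1)
    (hs01 : ∀ x ∈ V0, s x ∈ V1) (hs10 : ∀ x ∈ V1, s x ∈ V0)
    (h1 : s ∘ₗ s = 0)
    (h2a : ∀ x ∈ V0, ∀ y, B (s x) y = B x (s y))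
    (h2b : ∀ x ∈ V1, ∀ y, B (s x) y = - B x (s y))
    (h3 : s ∘ₗ d + d ∘ₗ s = LinearMap.id - t)
    (h4 : d ∘ₗ t = t ∘ₗ d)
    (h5 : ∀ x y, B (t x) y = B x (t y))
    (h6 : t ∘ₗ t = t)
    (h7a : s ∘ₗ t = 0) (h7b : t ∘ₗ s = 0)
    (hharm : d ∘ₗ t = 0) :
    -- V = im d ⊕ im s ⊕ im t (internal direct sum)
    LinearMap.range d ⊔ LinearMap.range s ⊔ LinearMap.range t = ⊤ ∧
    Disjoint (LinearMap.range d) (LinearMap.range s) ∧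
    Disjoint (LinearMap.range d ⊔ LinearMap.range s) (LinearMap.range t) ∧
    -- im t is orthogonal to im d ⊕ im s
    (∀ x ∈ LinearMap.range t, ∀ y ∈ LinearMap.range d ⊔ LinearMap.range s,
      B x y = 0 ∧ B y x = 0) ∧
    -- im s is isotropic
    (∀ x y : V, B (s x) (s y) = 0) ∧
    -- ker d = im d ⊕ im t, so im t carries the homology of (V, d)
    LinearMap.ker d = LinearMap.range d ⊔ LinearMap.range t := by

  -- pointwise identities
  have hsd : ∀ x, s (d x) + d (s x) = x - t x := by
    intro x
    have := LinearMap.congr_fun h3 x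
    simpa using this
  have hdd : ∀ x, d (d x) = 0 := fun x => LinearMap.congr_fun hd2 x
  have hss : ∀ x, s (s x) = 0 := fun x => LinearMap.congr_fun h1 x
  have hdt : ∀ x, d (t x) = 0 := fun x => LinearMap.congr_fun hharm x
  have htd : ∀ x, t (d x) = 0 := by
    intro x
    have := LinearMap.congr_fun h4 x
    rw [LinearMap.comp_apply, LinearMap.comp_apply] at this
    rw [← this, hdt]
  have hst : ∀ x, s (t x) = 0 := fun x => LinearMap.congr_fun h7a x
  have hts : ∀ x, t (s x) = 0 := fun x => LinearMap.congr_fun h7b x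
  have htt : ∀ x, t (t x) = t x := fun x => LinearMap.congr_fun h6 x
  have hty : ∀ y ∈ LinearMap.range d ⊔ LinearMap.range s, t y = 0 := by
    intro y hy
    rcases Submodule.mem_sup.mp hy with ⟨a, ⟨a', rfl⟩, b, ⟨b', rfl⟩, rfl⟩
    simp [htd, hts]
  refine ⟨?_, ?_, ?_, ?_, ?_, ?_⟩
  · rw [eq_top_iff]
    intro x _
    have hx : x = d (s x) + (s (d x) + t x) := by
      have := hsd x; linear_combination (norm := module) -this
    rw [hx]
    refine Submodule.add_mem _ (Submodule.mem_sup_left (Submodule.mem_sup_left ⟨s x, rfl⟩)) (Submodule.add_mem _ (Submodule.mem_sup_left (Submodule.mem_sup_right ⟨d x, rfl⟩)) (Submodule.mem_sup_right ⟨x, rfl⟩))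
  · rw [Submodule.disjoint_def]
    rintro v ⟨a, rfl⟩ ⟨b, hb⟩
    have h1' : s (d a) = 0 := by rw [← hb, hss]
    have := hsd (d a)
    rw [hdd, htd, h1', map_zero] at this
    simpa using this.symm
  · rw [Submodule.disjoint_def]
    rintro v hv ⟨u, rfl⟩
    have := hty _ hv
    rwa [htt] at this
  · rintro x ⟨u, rfl⟩ y hy
    constructor
    · rw [h5, hty _ hy, map_zero]
    · have : B y (t u) = B (t y) u := (h5 y u).symm
      rw [this, hty _ hy]; simp
  · intro x y
    obtain ⟨x0, x1, hx0, hx1, hx⟩ := Submodule.codisjoint_iff_exists_add_eq.mp hgr.codisjoint x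
    have e0 : B (s x0) (s y) = 0 := by rw [h2a x0 hx0, hss, map_zero]
    have e1 : B (s x1) (s y) = 0 := by rw [h2b x1 hx1, hss, map_zero]; ring
    calc B (s x) (s y) = B (s x0) (s y) + B (s x1) (s y) := by
          rw [← hx]; simp [map_add]
      _ = 0 := by rw [e0, e1, add_zero]
  · apply le_antisymm
    · intro x hx
      have hdx : d x = 0 := hx
      have : x = d (s x) + t x := by
        have := hsd x
        rw [hdx, map_zero, zero_add] at this
        linear_combination (norm := module) -this
      rw [this]
      exact Submodule.add_mem _ (Submodule.mem_sup_left ⟨s x, rfl⟩) (Submodule.mem_sup_right ⟨x, rfl⟩)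
    · rw [sup_le_iff]
      constructor
      · rintro v ⟨a, rfl⟩
        exact hdd a
      · rintro v ⟨a, rfl⟩
        exact hdt a
end

section
/- Let (V, d) be a ℤ/2-graded dg vector space over a field k of characteristic zero, and let B be a bilinear form on V compatible with d. Suppose U and W are graded subspaces of V (U = (U∩V₀) ⊕ (U∩V₁) and likewise for W) such that V is the internal direct sum im d ⊕ U ⊕ W, W is orthogonal to im d ⊕ U with respect to B, U is isotropic (B(u, u') = 0 for all u, u' ∈ U), W ⊆ ker d, and ker d = im d ⊕ W. Then there exists a harmonious Hodge decomposition (t, s) of (V, d, B) with im t = W and im s = U. -/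
theorem Submodule.linear_proj_add_linearProjOfIsCompl_eq_self {k V : Type*} [Field k]
    [AddCommGroup V] [Module k V] {p q : Submodule k V} (h : IsCompl p q) (x : V) :
    (Submodule.linearProjOfIsCompl p q h x : V) + Submodule.linearProjOfIsCompl q p h.symm x = x :=
  Submodule.projection_add_projection_eq_self h x

/-- If `p` and `q` are complementary graded submodules, the projection onto `p`
along `q` preserves the `V0`-component. -/
lemma graded_proj_aux {k V : Type*} [Field k] [AddCommGroup V] [Module k V]
    (V0 V1 p q : Submodule k V) (hgr : IsCompl V0 V1)
    (hp : p ≤ (p ⊓ V0) ⊔ (p ⊓ V1)) (hq : q ≤ (q ⊓ V0) ⊔ (q ⊓ V1))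
    (h : IsCompl p q) {x : V} (hx : x ∈ V0) :
    (↑(Submodule.linearProjOfIsCompl p q h x) : V) ∈ V0 := by
  set a := Submodule.linearProjOfIsCompl p q h x with ha
  have hb : x - ↑a ∈ q := by
    have h0 := Submodule.linear_proj_add_linearProjOfIsCompl_eq_self h x
    rw [← ha] at h0
    rw [sub_eq_of_eq_add' h0.symm]
    exact Submodule.coe_mem _
  obtain ⟨a0, ha0, a1, ha1, haa⟩ := Submodule.mem_sup.1 (hp a.2)
  obtain ⟨b0, hb0, b1, hb1, hbb⟩ := Submodule.mem_sup.1 (hq hb)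
  have key : a1 + b1 = 0 := by
    have h1 : a1 + b1 ∈ V1 := add_mem ha1.2 hb1.2
    have h2 : a1 + b1 ∈ V0 := by
      have hx' : a0 + a1 + (b0 + b1) = x := by rw [haa, hbb]; abel
      have : a1 + b1 = x - a0 - b0 := by rw [← hx']; abel
      rw [this]; exact sub_mem (sub_mem hx ha0.2) hb0.2
    exact (Submodule.disjoint_def.1 hgr.disjoint _ h2 h1)
  have ha1z : a1 = 0 := by
    have h2 : a1 ∈ q := by
      rw [eq_neg_of_add_eq_zero_left key]; exact neg_mem hb1.1
    exact Submodule.disjoint_def.1 h.disjoint _ ha1.1 h2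
  have : (a : V) = a0 := by rw [← haa, ha1z, add_zero]
  rw [this]; exact ha0.2



/-- Conversely, a decomposition `V = im d ⊕ U ⊕ W` into graded
subspaces with `W ⊥ (im d ⊕ U)`, `U` isotropic, `W ⊆ ker d` and
`ker d = im d ⊕ W` gives rise to a harmonious Hodge decomposition `(t, s)` of
`(V, d, B)` with `im t = W` and `im s = U`. -/
theorem three_term_decomposition_gives_harmonious_hodge
    {k V : Type*} [Field k] [CharZero k] [AddCommGroup V] [Module k V]
    -- ℤ/2-grading: V = V₀ ⊕ V₁
    (V0 V1 : Submodule k V) (hgr : IsCompl V0 V1)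
    -- the differential: odd, square zero
    (d : V →ₗ[k] V) (hd2 : d ∘ₗ d = 0)
    (hd01 : ∀ x ∈ V0, d x ∈ V1) (hd10 : ∀ x ∈ V1, d x ∈ V0)
    -- bilinear form compatible with d
    (B : V →ₗ[k] V →ₗ[k] k)
    (hBd0 : ∀ x ∈ V0, ∀ y, B (d x) y + B x (d y) = 0)
    (hBd1 : ∀ x ∈ V1, ∀ y, B (d x) y - B x (d y) = 0)
    -- graded subspaces U, W
    (U W : Submodule k V)
    (hUgr : U = (U ⊓ V0) ⊔ (U ⊓ V1))
    (hWgr : W = (W ⊓ V0) ⊔ (W ⊓ V1))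
    -- V = im d ⊕ U ⊕ W (internal direct sum)
    (hsum : LinearMap.range d ⊔ U ⊔ W = ⊤)
    (hdisj1 : Disjoint (LinearMap.range d) U)
    (hdisj2 : Disjoint (LinearMap.range d ⊔ U) W)
    -- W is orthogonal to im d ⊕ U
    (horth : ∀ w ∈ W, ∀ y ∈ LinearMap.range d ⊔ U, B w y = 0 ∧ B y w = 0)
    -- U is isotropic
    (hiso : ∀ u ∈ U, ∀ u' ∈ U, B u u' = 0)
    -- W carries the homology
    (hWker : W ≤ LinearMap.ker d)
    (hker : LinearMap.ker d = LinearMap.range d ⊔ W) :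
    ∃ t s : V →ₗ[k] V,
      -- t is even, s is odd
      (∀ x ∈ V0, t x ∈ V0) ∧ (∀ x ∈ V1, t x ∈ V1) ∧
      (∀ x ∈ V0, s x ∈ V1) ∧ (∀ x ∈ V1, s x ∈ V0) ∧
      -- conditions (1)-(7)
      s ∘ₗ s = 0 ∧
      (∀ x ∈ V0, ∀ y, B (s x) y = B x (s y)) ∧
      (∀ x ∈ V1, ∀ y, B (s x) y = - B x (s y)) ∧
      s ∘ₗ d + d ∘ₗ s = LinearMap.id - t ∧
      d ∘ₗ t = t ∘ₗ d ∧
      (∀ x y, B (t x) y = B x (t y)) ∧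
      t ∘ₗ t = t ∧
      s ∘ₗ t = 0 ∧ t ∘ₗ s = 0 ∧
      -- harmonious
      d ∘ₗ t = 0 ∧
      -- with im t = W and im s = U
      LinearMap.range t = W ∧ LinearMap.range s = U := by
  classical
  set R := LinearMap.range d with hRdef
  have hdd : ∀ x, d (d x) = 0 := fun x => by
    have := LinearMap.ext_iff.1 hd2 x; simpa using this
  have hRker : ∀ r ∈ R, d r = 0 := by rintro _ ⟨v, rfl⟩; exact hdd v
  have hWd : ∀ w ∈ W, d w = 0 := fun w hw => LinearMap.mem_ker.1 (hWker hw)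
  have hdisjRUW : Disjoint R (U ⊔ W) := by
    rw [Submodule.disjoint_def]
    intro r hr hrUW
    obtain ⟨u, hu, w, hw, huw⟩ := Submodule.mem_sup.1 hrUW
    have hwz : w = 0 := by
      have h1 : w ∈ R ⊔ U := by
        have hww : w = r - u := by rw [← huw]; abel
        rw [hww]
        exact sub_mem (Submodule.mem_sup_left hr) (Submodule.mem_sup_right hu)
      exact Submodule.disjoint_def.1 hdisj2 w h1 hw
    have hru : r = u := by rw [← huw, hwz, add_zero]
    exact Submodule.disjoint_def.1 hdisj1 r hr (hru ▸ hu)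
  have hcompl1 : IsCompl (R ⊔ U) W := ⟨hdisj2, codisjoint_iff.2 hsum⟩
  have hcompl2 : IsCompl R (U ⊔ W) :=
    ⟨hdisjRUW, codisjoint_iff.2 (by rw [← sup_assoc]; exact hsum)⟩
  have hUkerd : ∀ u ∈ U, d u = 0 → u = 0 := by
    intro u hu hdu
    have h1 : u ∈ R ⊔ W := by rw [← hker]; exact LinearMap.mem_ker.2 hdu
    obtain ⟨r, hr, w, hw, hrw⟩ := Submodule.mem_sup.1 h1
    have hwz : w = 0 := by
      have h2 : w ∈ R ⊔ U := by
        have hww : w = u - r := by rw [← hrw]; abel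
        rw [hww]
        exact sub_mem (Submodule.mem_sup_right hu) (Submodule.mem_sup_left hr)
      exact Submodule.disjoint_def.1 hdisj2 w h2 hw
    have h3 : u ∈ R := by rw [← hrw, hwz, add_zero]; exact hr
    exact Submodule.disjoint_def.1 hdisj1 u h3 hu
  have hsurj : ∀ r ∈ R, ∃ u ∈ U, d u = r := by
    rintro _ ⟨v, rfl⟩
    have hv : v ∈ R ⊔ U ⊔ W := by rw [hsum]; trivial
    obtain ⟨a, ha, w, hw, haw⟩ := Submodule.mem_sup.1 hv
    obtain ⟨r, hr, u, hu, hru⟩ := Submodule.mem_sup.1 ha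
    refine ⟨u, hu, ?_⟩
    have hveq : v = r + u + w := by rw [← haw, ← hru]
    rw [hveq, map_add, map_add, hRker r hr, hWd w hw, zero_add, add_zero]
  let dU : U →ₗ[k] R :=
    LinearMap.codRestrict R (d.domRestrict U) (fun u => LinearMap.mem_range_self d (u : V))
  have hdUval : ∀ u : U, (dU u : V) = d u := fun u => rfl
  have hinj : Function.Injective dU := by
    intro u u' h
    have h1 : d (↑u - ↑u') = 0 := by
      have h0 := congrArg Subtype.val h
      rw [hdUval, hdUval] at h0
      rw [map_sub, h0, sub_self]
    have h2 := hUkerd _ (sub_mem u.2 u'.2) h1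
    exact Subtype.ext (by rw [sub_eq_zero] at h2; exact h2)
  have hsurj' : Function.Surjective dU := by
    rintro ⟨r, hr⟩
    obtain ⟨u, hu, hdu⟩ := hsurj r hr
    exact ⟨⟨u, hu⟩, Subtype.ext hdu⟩
  let e : U ≃ₗ[k] R := LinearEquiv.ofBijective dU ⟨hinj, hsurj'⟩
  have heval : ∀ u : U, (e u : V) = d u := fun u => rfl
  let P : V →ₗ[k] R := Submodule.linearProjOfIsCompl R (U ⊔ W) hcompl2
  let Q : V →ₗ[k] W := Submodule.linearProjOfIsCompl W (R ⊔ U) hcompl1.symm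
  let t : V →ₗ[k] V := W.subtype ∘ₗ Q
  let s : V →ₗ[k] V := U.subtype ∘ₗ (e.symm.toLinearMap ∘ₗ P)
  have htapp : ∀ x, t x = ↑(Q x) := fun x => rfl
  have hsapp : ∀ x, s x = ↑(e.symm (P x)) := fun x => rfl
  have htW : ∀ w ∈ W, t w = w := by
    intro w hw
    have h0 : Q w = ⟨w, hw⟩ := Submodule.linearProjOfIsCompl_apply_left hcompl1.symm ⟨w, hw⟩
    rw [htapp, h0]
  have htK : ∀ x ∈ R ⊔ U, t x = 0 := by
    intro x hx
    rw [htapp, (show Q x = 0 from Submodule.linearProjOfIsCompl_apply_right' hcompl1.symm hx),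
      Submodule.coe_zero]
  have hsmem : ∀ x, s x ∈ U := fun x => (e.symm (P x)).2
  have htmem : ∀ x, t x ∈ W := fun x => (Q x).2
  have hds : ∀ x, d (s x) = ↑(P x) := by
    intro x
    rw [hsapp, ← heval (e.symm (P x)), e.apply_symm_apply]
  have hsUW : ∀ x ∈ U ⊔ W, s x = 0 := by
    intro x hx
    rw [hsapp, (show P x = 0 from Submodule.linearProjOfIsCompl_apply_right' hcompl2 hx), map_zero,
      Submodule.coe_zero]
  have hsU : ∀ u ∈ U, s u = 0 := fun u hu => hsUW u (Submodule.mem_sup_left hu)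
  have hsW : ∀ w ∈ W, s w = 0 := fun w hw => hsUW w (Submodule.mem_sup_right hw)
  have hsd : ∀ u ∈ U, s (d u) = u := by
    intro u hu
    have hP : P (d u) = ⟨d u, LinearMap.mem_range_self d u⟩ :=
      Submodule.linearProjOfIsCompl_apply_left hcompl2 ⟨d u, LinearMap.mem_range_self d u⟩
    rw [hsapp, hP]
    have h0 : e.symm ⟨d u, LinearMap.mem_range_self d u⟩ = ⟨u, hu⟩ := by
      rw [LinearEquiv.symm_apply_eq]
      exact Subtype.ext (heval ⟨u, hu⟩).symm
    rw [h0]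
  have hdsR : ∀ r ∈ R, d (s r) = r := by
    intro r hr
    rw [hds]
    have h0 : P r = ⟨r, hr⟩ := Submodule.linearProjOfIsCompl_apply_left hcompl2 ⟨r, hr⟩
    rw [h0]
  -- grading facts
  have hRgr : R ≤ (R ⊓ V0) ⊔ (R ⊓ V1) := by
    rintro _ ⟨v, rfl⟩
    have hv : v ∈ V0 ⊔ V1 := by rw [codisjoint_iff.1 hgr.codisjoint]; trivial
    obtain ⟨v0, hv0, v1, hv1, hvv⟩ := Submodule.mem_sup.1 hv
    rw [← hvv, map_add]
    exact add_mem
      (Submodule.mem_sup_right (Submodule.mem_inf.2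
        ⟨LinearMap.mem_range_self d v0, hd01 v0 hv0⟩))
      (Submodule.mem_sup_left (Submodule.mem_inf.2
        ⟨LinearMap.mem_range_self d v1, hd10 v1 hv1⟩))
  have hsupgr : ∀ p q : Submodule k V, p ≤ (p ⊓ V0) ⊔ (p ⊓ V1) → q ≤ (q ⊓ V0) ⊔ (q ⊓ V1) →
      p ⊔ q ≤ ((p ⊔ q) ⊓ V0) ⊔ ((p ⊔ q) ⊓ V1) := by
    intro p q hp hq
    refine sup_le (hp.trans ?_) (hq.trans ?_)
    · exact sup_le_sup (inf_le_inf_right _ le_sup_left) (inf_le_inf_right _ le_sup_left)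
    · exact sup_le_sup (inf_le_inf_right _ le_sup_right) (inf_le_inf_right _ le_sup_right)
  have hKgr : R ⊔ U ≤ ((R ⊔ U) ⊓ V0) ⊔ ((R ⊔ U) ⊓ V1) := hsupgr _ _ hRgr hUgr.le
  have hUWgr : U ⊔ W ≤ ((U ⊔ W) ⊓ V0) ⊔ ((U ⊔ W) ⊓ V1) := hsupgr _ _ hUgr.le hWgr.le
  have hswap : ∀ p : Submodule k V, p ≤ (p ⊓ V0) ⊔ (p ⊓ V1) → p ≤ (p ⊓ V1) ⊔ (p ⊓ V0) :=
    fun p h => h.trans (le_of_eq (sup_comm _ _))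
  have ht0 : ∀ x ∈ V0, t x ∈ V0 := fun x hx =>
    graded_proj_aux V0 V1 W (R ⊔ U) hgr hWgr.le hKgr hcompl1.symm hx
  have ht1 : ∀ x ∈ V1, t x ∈ V1 := fun x hx =>
    graded_proj_aux V1 V0 W (R ⊔ U) hgr.symm (hswap _ hWgr.le) (hswap _ hKgr) hcompl1.symm hx
  have hP0 : ∀ x ∈ V0, (↑(P x) : V) ∈ V0 := fun x hx =>
    graded_proj_aux V0 V1 R (U ⊔ W) hgr hRgr hUWgr hcompl2 hx
  have hP1 : ∀ x ∈ V1, (↑(P x) : V) ∈ V1 := fun x hx =>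
    graded_proj_aux V1 V0 R (U ⊔ W) hgr.symm (hswap _ hRgr) (hswap _ hUWgr) hcompl2 hx
  have hs01 : ∀ x ∈ V0, s x ∈ V1 := by
    intro x hx
    obtain ⟨u0, hu0, u1, hu1, huu⟩ := Submodule.mem_sup.1 (hUgr.le (hsmem x))
    have hdsx : d (s x) ∈ V0 := by rw [hds]; exact hP0 x hx
    have hdu0 : d u0 = 0 := by
      have h1 : d u0 ∈ V1 := hd01 u0 (Submodule.mem_inf.1 hu0).2
      have h2 : d u0 ∈ V0 := by
        have h3 : d u0 = d (s x) - d u1 := by rw [← huu, map_add]; abel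
        rw [h3]; exact sub_mem hdsx (hd10 u1 (Submodule.mem_inf.1 hu1).2)
      exact Submodule.disjoint_def.1 hgr.disjoint _ h2 h1
    have hu0z : u0 = 0 := hUkerd u0 (Submodule.mem_inf.1 hu0).1 hdu0
    have h4 : s x = u1 := by rw [← huu, hu0z, zero_add]
    rw [h4]; exact (Submodule.mem_inf.1 hu1).2
  have hs10 : ∀ x ∈ V1, s x ∈ V0 := by
    intro x hx
    obtain ⟨u0, hu0, u1, hu1, huu⟩ := Submodule.mem_sup.1 (hUgr.le (hsmem x))
    have hdsx : d (s x) ∈ V1 := by rw [hds]; exact hP1 x hx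
    have hdu1 : d u1 = 0 := by
      have h1 : d u1 ∈ V0 := hd10 u1 (Submodule.mem_inf.1 hu1).2
      have h2 : d u1 ∈ V1 := by
        have h3 : d u1 = d (s x) - d u0 := by rw [← huu, map_add]; abel
        rw [h3]; exact sub_mem hdsx (hd01 u0 (Submodule.mem_inf.1 hu0).2)
      exact Submodule.disjoint_def.1 hgr.disjoint _ h1 h2
    have hu1z : u1 = 0 := hUkerd u1 (Submodule.mem_inf.1 hu1).1 hdu1
    have h4 : s x = u0 := by rw [← huu, hu1z, add_zero]
    rw [h4]; exact (Submodule.mem_inf.1 hu0).2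
  have hdec : ∀ x : V, ∃ r ∈ R, ∃ u ∈ U, ∃ w ∈ W, x = r + u + w := by
    intro x
    have hx : x ∈ R ⊔ U ⊔ W := by rw [hsum]; trivial
    obtain ⟨a, ha, w, hw, haw⟩ := Submodule.mem_sup.1 hx
    obtain ⟨r, hr, u, hu, hru⟩ := Submodule.mem_sup.1 ha
    exact ⟨r, hr, u, hu, w, hw, by rw [← haw, ← hru]⟩
  have hBU_UW : ∀ a ∈ U, ∀ z ∈ U ⊔ W, B a z = 0 ∧ B z a = 0 := by
    intro a ha z hz
    obtain ⟨u', hu', w', hw', hzz⟩ := Submodule.mem_sup.1 hz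
    rw [← hzz]
    constructor
    · rw [map_add, hiso a ha u' hu',
        (horth w' hw' a (Submodule.mem_sup_right ha)).2, add_zero]
    · rw [map_add, LinearMap.add_apply, hiso u' hu' a ha,
        (horth w' hw' a (Submodule.mem_sup_right ha)).1, add_zero]
  have hxPUW : ∀ x : V, x - d (s x) ∈ U ⊔ W := by
    intro x
    rw [hds x]
    have h0 := Submodule.linear_proj_add_linearProjOfIsCompl_eq_self hcompl2 x
    rw [sub_eq_of_eq_add' h0.symm]
    exact Submodule.coe_mem _
  have hBsy : ∀ x y, B (s x) y = B (s x) (d (s y)) := by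
    intro x y
    have h2 := (hBU_UW (s x) (hsmem x) _ (hxPUW y)).1
    rw [map_sub] at h2
    linear_combination h2
  have hBxs : ∀ x y, B x (s y) = B (d (s x)) (s y) := by
    intro x y
    have h3 := (hBU_UW (s y) (hsmem y) _ (hxPUW x)).2
    rw [map_sub, LinearMap.sub_apply] at h3
    linear_combination h3
  have hBs0 : ∀ x ∈ V0, ∀ y, B (s x) y = B x (s y) := by
    intro x hx y
    have h4 := hBd1 (s x) (hs01 x hx) (s y)
    rw [hBsy, hBxs]
    linear_combination -h4
  have hBs1 : ∀ x ∈ V1, ∀ y, B (s x) y = - B x (s y) := by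
    intro x hx y
    have h4 := hBd0 (s x) (hs10 x hx) (s y)
    rw [hBsy, hBxs]
    linear_combination h4
  refine ⟨t, s, ht0, ht1, hs01, hs10, ?_, hBs0, hBs1, ?_, ?_, ?_, ?_, ?_, ?_, ?_, ?_, ?_⟩
  · ext x
    simp only [LinearMap.comp_apply, LinearMap.zero_apply]
    exact hsU _ (hsmem x)
  · ext x
    obtain ⟨r, hr, u, hu, w, hw, hx⟩ := hdec x
    subst hx
    simp only [LinearMap.add_apply, LinearMap.comp_apply, LinearMap.sub_apply,
      LinearMap.id_apply]
    have hdx : d (r + u + w) = d u := by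
      rw [map_add, map_add, hRker r hr, hWd w hw, zero_add, add_zero]
    have hsx : s (r + u + w) = s r := by
      rw [map_add, map_add, hsU u hu, hsW w hw, add_zero, add_zero]
    have htx : t (r + u + w) = w := by
      rw [map_add, htK _ (add_mem (Submodule.mem_sup_left hr) (Submodule.mem_sup_right hu)),
        htW w hw, zero_add]
    rw [hdx, hsd u hu, hsx, hdsR r hr, htx]
    abel
  · ext x
    simp only [LinearMap.comp_apply]
    rw [hWd _ (htmem x), htK _ (Submodule.mem_sup_left (LinearMap.mem_range_self d x))]
  · intro x y
    have hx' : x - t x ∈ R ⊔ U := by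
      rw [htapp]
      have h0 := Submodule.linear_proj_add_linearProjOfIsCompl_eq_self hcompl1.symm x
      rw [sub_eq_of_eq_add' h0.symm]
      exact Submodule.coe_mem _
    have hy' : y - t y ∈ R ⊔ U := by
      rw [htapp]
      have h0 := Submodule.linear_proj_add_linearProjOfIsCompl_eq_self hcompl1.symm y
      rw [sub_eq_of_eq_add' h0.symm]
      exact Submodule.coe_mem _
    have h1 : B (t x) y = B (t x) (t y) := by
      have h2 := (horth (t x) (htmem x) (y - t y) hy').1
      rw [map_sub] at h2
      linear_combination h2
    have h3 : B x (t y) = B (t x) (t y) := by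
      have h4 := (horth (t y) (htmem y) (x - t x) hx').2
      rw [map_sub, LinearMap.sub_apply] at h4
      linear_combination h4
    rw [h1, h3]
  · ext x
    simp only [LinearMap.comp_apply]
    exact htW _ (htmem x)
  · ext x
    simp only [LinearMap.comp_apply, LinearMap.zero_apply]
    exact hsW _ (htmem x)
  · ext x
    simp only [LinearMap.comp_apply, LinearMap.zero_apply]
    exact htK _ (Submodule.mem_sup_right (hsmem x))
  · ext x
    simp only [LinearMap.comp_apply, LinearMap.zero_apply]
    exact hWd _ (htmem x)
  · apply le_antisymm
    · rintro _ ⟨x, rfl⟩; exact htmem x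
    · intro w hw; exact ⟨w, htW w hw⟩
  · apply le_antisymm
    · rintro _ ⟨x, rfl⟩; exact hsmem x
    · intro u hu; exact ⟨d u, hsd u hu⟩
end

section
/- Let (V, d) be a finite-dimensional ℤ/2-graded dg vector space over a field k of characteristic zero which is acyclic, i.e. ker d = im d. Let B be a bilinear form on V compatible with d. Then there exists a bilinear form C on V such that B(x, y) = C(d x, y) + (−1)^{|x|} C(x, d y) for all homogeneous x ∈ V and all y ∈ V. -/
set_option maxHeartbeats 1000000



/-- On a finite-dimensional acyclic ℤ/2-graded dg vector space
`(V, d)` over a field of characteristic zero, every bilinear form `B` compatible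
with `d` is a boundary: there is a bilinear form `C` with
`B(x,y) = C(dx,y) + (−1)^{|x|} C(x,dy)` for homogeneous `x` and all `y`. -/
theorem compatible_form_is_boundary_on_acyclic
    {k V : Type*} [Field k] [CharZero k] [AddCommGroup V] [Module k V]
    [FiniteDimensional k V]
    -- ℤ/2-grading: V = V₀ ⊕ V₁
    (V0 V1 : Submodule k V) (hgr : IsCompl V0 V1)
    -- the differential: odd, square zero
    (d : V →ₗ[k] V) (hd2 : d ∘ₗ d = 0)
    (hd01 : ∀ x ∈ V0, d x ∈ V1) (hd10 : ∀ x ∈ V1, d x ∈ V0)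
    -- (V, d) is acyclic
    (hacyclic : LinearMap.ker d = LinearMap.range d)
    -- bilinear form compatible with d
    (B : V →ₗ[k] V →ₗ[k] k)
    (hBd0 : ∀ x ∈ V0, ∀ y, B (d x) y + B x (d y) = 0)
    (hBd1 : ∀ x ∈ V1, ∀ y, B (d x) y - B x (d y) = 0) :
    ∃ C : V →ₗ[k] V →ₗ[k] k,
      (∀ x ∈ V0, ∀ y, B x y = C (d x) y + C x (d y)) ∧
      (∀ x ∈ V1, ∀ y, B x y = C (d x) y - C x (d y)) := by
  classical
  set K := LinearMap.ker d with hKdef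
  obtain ⟨W, hW⟩ := K.exists_isCompl
  set πK : V →ₗ[k] K := K.linearProjOfIsCompl W hW with hπK
  set πW : V →ₗ[k] W := W.linearProjOfIsCompl K hW.symm with hπW
  have hdec : ∀ x : V, (πK x : V) + (πW x : V) = x := fun x =>
    Submodule.projection_add_projection_eq_self hW x
  have hdK : ∀ x : V, d x ∈ K := fun x => by
    simpa [hKdef, LinearMap.mem_ker] using LinearMap.congr_fun hd2 x
  -- d restricted to W, landing in K
  set dW : W →ₗ[k] K := d.restrict (fun x _ => hdK x) with hdWdef
  have hdW_apply : ∀ w : W, (dW w : V) = d (w : V) := fun w => rfl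
  have hdWinj : Function.Injective dW := by
    intro w w' hww
    have h1 : d ((w : V) - w') = 0 := by
      have h := congrArg (Subtype.val) hww
      rw [hdW_apply, hdW_apply] at h
      simp [map_sub, h]
    have h2 : ((w : V) - w') ∈ K ⊓ W := ⟨h1, sub_mem w.2 w'.2⟩
    rw [hW.inf_eq_bot, Submodule.mem_bot] at h2
    exact Subtype.ext (sub_eq_zero.mp h2)
  have hdWsurj : Function.Surjective dW := by
    intro c
    have hc : (c : V) ∈ LinearMap.range d := hacyclic ▸ c.2
    obtain ⟨x, hx⟩ := hc
    refine ⟨πW x, Subtype.ext ?_⟩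
    rw [hdW_apply]
    have hk : d ((πK x : V)) = 0 := (πK x).2
    have := congrArg d (hdec x)
    rw [map_add, hk, zero_add] at this
    rw [this, hx]
  set e := LinearEquiv.ofBijective dW ⟨hdWinj, hdWsurj⟩ with hedef
  set h : V →ₗ[k] V := W.subtype ∘ₗ (e.symm : K →ₗ[k] W) ∘ₗ πK with hhdef
  have hh_apply : ∀ x : V, h x = (e.symm (πK x) : V) := fun x => rfl
  -- d ∘ h = πK
  have hdh : ∀ x : V, d (h x) = (πK x : V) := by
    intro x
    rw [hh_apply]
    have : dW (e.symm (πK x)) = πK x := e.apply_symm_apply (πK x)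
    calc d ((e.symm (πK x) : W) : V) = (dW (e.symm (πK x)) : V) := (hdW_apply _).symm
      _ = (πK x : V) := by rw [this]
  -- h ∘ d = πW
  have hhd : ∀ x : V, h (d x) = (πW x : V) := by
    intro x
    rw [hh_apply]
    have hdx : d x = d ((πW x : V)) := by
      have hk : d ((πK x : V)) = 0 := (πK x).2
      have := congrArg d (hdec x)
      rw [map_add, hk, zero_add] at this
      exact this.symm
    have hπ : πK (d x) = dW (πW x) := by
      apply Subtype.ext
      have h1 : (πK (d x) : V) = d x :=
        congrArg Subtype.val (Submodule.linearProjOfIsCompl_apply_left hW ⟨d x, hdK x⟩)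
      rw [h1, hdW_apply, ← hdx]
    rw [hπ, show dW (πW x) = e (πW x) from rfl, e.symm_apply_apply]
  have H1 : ∀ x : V, d (h x) + h (d x) = x := fun x => by
    rw [hdh, hhd]; exact hdec x
  -- grading involution
  set π0 : V →ₗ[k] V0 := V0.linearProjOfIsCompl V1 hgr with hπ0
  set g : V →ₗ[k] V := (2 : k) • (V0.subtype ∘ₗ π0) - LinearMap.id with hgdef
  have hg_apply : ∀ a ∈ V0, ∀ b ∈ V1, g (a + b) = a - b := by
    intro a ha b hb
    have h0a : (π0 a : V) = a :=
      congrArg Subtype.val (Submodule.linearProjOfIsCompl_apply_left hgr ⟨a, ha⟩)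
    have h0b : π0 b = 0 := Submodule.projectionOnto_apply_of_mem_right hgr hb
    have hab : (π0 (a + b) : V) = a := by
      have : π0 (a + b) = π0 a := by rw [map_add, h0b, add_zero]
      rw [this, h0a]
    have hg : g (a + b) = (2 : k) • ((π0 (a + b) : V)) - (a + b) := rfl
    rw [hg, hab, two_smul]
    abel
  -- odd homotopy
  set h' : V →ₗ[k] V := (2⁻¹ : k) • (h - g ∘ₗ h ∘ₗ g) with hh'def
  have hh'_apply : ∀ x : V, h' x = (2⁻¹ : k) • (h x - g (h (g x))) := fun x => rfl
  have hdecg : ∀ x : V, ∃ a ∈ V0, ∃ b ∈ V1, x = a + b := by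
    intro x
    refine ⟨V0.linearProjOfIsCompl V1 hgr x, (V0.linearProjOfIsCompl V1 hgr x).2,
      V1.linearProjOfIsCompl V0 hgr.symm x, (V1.linearProjOfIsCompl V0 hgr.symm x).2, ?_⟩
    exact (Submodule.projection_add_projection_eq_self hgr x).symm
  have hg0 : ∀ a ∈ V0, g a = a := by
    intro a ha
    have := hg_apply a ha 0 (zero_mem V1); simpa using this
  have hg1 : ∀ b ∈ V1, g b = -b := by
    intro b hb
    have := hg_apply 0 (zero_mem V0) b hb; simpa using this
  have hgg : ∀ x : V, g (g x) = x := by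
    intro x
    obtain ⟨a, ha, b, hb, rfl⟩ := hdecg x
    rw [hg_apply a ha b hb, sub_eq_add_neg, hg_apply a ha (-b) (neg_mem hb)]
    abel
  have hgd : ∀ x : V, g (d x) = -d (g x) := by
    intro x
    obtain ⟨a, ha, b, hb, rfl⟩ := hdecg x
    have hda : d a ∈ V1 := hd01 a ha
    have hdb : d b ∈ V0 := hd10 b hb
    rw [hg_apply a ha b hb, map_add, map_sub]
    have h1 : g (d a + d b) = d b - d a := by
      rw [add_comm, hg_apply (d b) hdb (d a) hda]
    rw [h1]
    abel
  -- h' is odd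
  have hodd0 : ∀ x ∈ V0, h' x ∈ V1 := by
    intro x hx
    rw [hh'_apply, hg0 x hx]
    obtain ⟨a, ha, b, hb, hab⟩ := hdecg (h x)
    rw [hab, hg_apply a ha b hb]
    have : a + b - (a - b) = (2 : k) • b := by rw [two_smul]; abel
    rw [this, smul_smul]
    exact Submodule.smul_mem _ _ hb
  have hodd1 : ∀ x ∈ V1, h' x ∈ V0 := by
    intro x hx
    rw [hh'_apply, hg1 x hx, map_neg, map_neg]
    obtain ⟨a, ha, b, hb, hab⟩ := hdecg (h x)
    rw [hab, hg_apply a ha b hb]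
    have : a + b - -(a - b) = (2 : k) • a := by rw [two_smul]; abel
    rw [this, smul_smul]
    exact Submodule.smul_mem _ _ ha
  clear_value h' g π0 h e dW πK πW
  -- h' is a contracting homotopy
  have H1' : ∀ x : V, d (h' x) + h' (d x) = x := by
    intro x
    have key : d (h x) - d (g (h (g x))) + (h (d x) - g (h (g (d x)))) = (2 : k) • x := by
      have k1 : g (d (h (g x))) = -d (g (h (g x))) := hgd (h (g x))
      have k2 : g (h (g (d x))) = -g (h (d (g x))) := by rw [hgd x, map_neg, map_neg]
      have k3 : g (d (h (g x)) + h (d (g x))) = g (g x) := congrArg g (H1 (g x))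
      rw [map_add, k1, hgg x] at k3
      have k4 : d (g (h (g x))) - g (h (d (g x))) = -x := by
        conv_rhs => rw [← k3]
        abel
      have k5 := H1 x
      rw [k2, two_smul]
      calc d (h x) - d (g (h (g x))) + (h (d x) - - g (h (d (g x))))
          = (d (h x) + h (d x)) - (d (g (h (g x))) - g (h (d (g x)))) := by abel
        _ = x - -x := by rw [k5, k4]
        _ = x + x := by abel
    rw [hh'_apply, hh'_apply, map_smul, map_sub, ← smul_add, key, smul_smul]
    norm_num
  -- the primitive
  refine ⟨B ∘ₗ h', ?_, ?_⟩
  · intro x hx y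
    have hx1 : h' x ∈ V1 := hodd0 x hx
    have hb := hBd1 (h' x) hx1 y
    have hdx := H1' x
    calc B x y = B (d (h' x) + h' (d x)) y := by rw [hdx]
      _ = B (d (h' x)) y + B (h' (d x)) y := by rw [map_add, LinearMap.add_apply]
      _ = B (h' x) (d y) + B (h' (d x)) y := by linear_combination hb
      _ = (B ∘ₗ h') (d x) y + (B ∘ₗ h') x (d y) := by
          simp only [LinearMap.coe_comp, Function.comp_apply]; ring
  · intro x hx y
    have hx0 : h' x ∈ V0 := hodd1 x hx
    have hb := hBd0 (h' x) hx0 y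
    have hdx := H1' x
    calc B x y = B (d (h' x) + h' (d x)) y := by rw [hdx]
      _ = B (d (h' x)) y + B (h' (d x)) y := by rw [map_add, LinearMap.add_apply]
      _ = -B (h' x) (d y) + B (h' (d x)) y := by linear_combination hb
      _ = (B ∘ₗ h') (d x) y - (B ∘ₗ h') x (d y) := by
          simp only [LinearMap.coe_comp, Function.comp_apply]; ring
end

section
/- Let (V, d) be a finite-dimensional ℤ/2-graded dg vector space over a field k of characteristic zero which is acyclic (ker d = im d), and let B be a non-degenerate, homogeneous, graded ε-symmetric (ε = ±1) bilinear form on V compatible with d. Then there exists a graded subspace U of V which is an isotropic complement to im d: V = im d ⊕ U (internal direct sum) and B(u, u') = 0 for all u, u' ∈ U. -/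
set_option maxHeartbeats 2000000 in
/-- A finite-dimensional acyclic ℤ/2-graded dg vector space `(V, d)`
over a field of characteristic zero with a non-degenerate, homogeneous, graded
ε-symmetric bilinear form `B` compatible with `d` admits a graded isotropic
complement `U` to `im d`: `V = im d ⊕ U` and `B` vanishes on `U × U`. -/
theorem isotropic_complement_exists
    {k V : Type*} [Field k] [CharZero k] [AddCommGroup V] [Module k V]
    [FiniteDimensional k V]
    -- ℤ/2-grading: V = V₀ ⊕ V₁
    (V0 V1 : Submodule k V) (hgr : IsCompl V0 V1)
    -- the differential: odd, square zero
    (d : V →ₗ[k] V) (hd2 : d ∘ₗ d = 0)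
    (hd01 : ∀ x ∈ V0, d x ∈ V1) (hd10 : ∀ x ∈ V1, d x ∈ V0)
    -- (V, d) is acyclic
    (hacyclic : LinearMap.ker d = LinearMap.range d)
    -- bilinear form compatible with d
    (B : V →ₗ[k] V →ₗ[k] k)
    (hBd0 : ∀ x ∈ V0, ∀ y, B (d x) y + B x (d y) = 0)
    (hBd1 : ∀ x ∈ V1, ∀ y, B (d x) y - B x (d y) = 0)
    -- B is homogeneous: either even or odd
    (hhom : ((∀ x ∈ V0, ∀ y ∈ V1, B x y = 0) ∧ (∀ x ∈ V1, ∀ y ∈ V0, B x y = 0)) ∨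
            ((∀ x ∈ V0, ∀ y ∈ V0, B x y = 0) ∧ (∀ x ∈ V1, ∀ y ∈ V1, B x y = 0)))
    -- B is graded ε-symmetric, ε = ±1: B(x,y) = ε (−1)^{|x||y|} B(y,x)
    (ε : k) (hε : ε = 1 ∨ ε = -1)
    (hsym0 : ∀ x ∈ V0, ∀ y, B x y = ε * B y x)
    (hsym10 : ∀ x ∈ V1, ∀ y ∈ V0, B x y = ε * B y x)
    (hsym11 : ∀ x ∈ V1, ∀ y ∈ V1, B x y = - ε * B y x)
    -- B is non-degenerate
    (hnd : ∀ x : V, x ≠ 0 → ∃ y, B x y ≠ 0) :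
    ∃ U : Submodule k V,
      -- U is graded
      U = (U ⊓ V0) ⊔ (U ⊓ V1) ∧
      -- V = im d ⊕ U (internal direct sum)
      LinearMap.range d ⊔ U = ⊤ ∧
      Disjoint (LinearMap.range d) U ∧
      -- U is isotropic
      (∀ u ∈ U, ∀ u' ∈ U, B u u' = 0) := by
  classical
  set L := LinearMap.range d with hLdef
  have hd2' : ∀ x, d (d x) = 0 := fun x => LinearMap.congr_fun hd2 x
  -- grading projections (as plain functions into V)
  set pr0 : V → V := fun v => ((Submodule.linearProjOfIsCompl V0 V1 hgr) v : V) with hpr0def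
  set pr1 : V → V := fun v => ((Submodule.linearProjOfIsCompl V1 V0 hgr.symm) v : V) with hpr1def
  have hpr0mem : ∀ v, pr0 v ∈ V0 := fun v => Submodule.coe_mem _
  have hpr1mem : ∀ v, pr1 v ∈ V1 := fun v => Submodule.coe_mem _
  have hprsum : ∀ v, pr0 v + pr1 v = v := fun v =>
    Submodule.projection_add_projection_eq_self hgr v
  have huniq0 : ∀ x y, x ∈ V0 → y ∈ V1 → pr0 (x + y) = x := by
    intro x y hx hy
    have h1 : pr0 x = x :=
      congrArg Subtype.val (Submodule.linearProjOfIsCompl_apply_left hgr ⟨x, hx⟩)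
    have h2 : pr0 y = 0 := by
      rw [hpr0def]
      exact congrArg Subtype.val (Submodule.linearProjOfIsCompl_apply_right' hgr hy)
    have hadd : pr0 (x + y) = pr0 x + pr0 y := by
      rw [hpr0def]; simp [map_add]
    rw [hadd, h1, h2, add_zero]
  have huniq1 : ∀ x y, x ∈ V0 → y ∈ V1 → pr1 (x + y) = y := by
    intro x y hx hy
    have h1 : pr1 y = y :=
      congrArg Subtype.val (Submodule.linearProjOfIsCompl_apply_left hgr.symm ⟨y, hy⟩)
    have h2 : pr1 x = 0 := by
      rw [hpr1def]
      exact congrArg Subtype.val (Submodule.linearProjOfIsCompl_apply_right' hgr.symm hx)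
    have hadd : pr1 (x + y) = pr1 x + pr1 y := by
      rw [hpr1def]; simp [map_add]
    rw [hadd, h1, h2, zero_add]
  -- L is graded
  have hLgr : ∀ v ∈ L, pr0 v ∈ L ∧ pr1 v ∈ L := by
    intro v hv
    obtain ⟨a, rfl⟩ := hv
    have hda : d a = d (pr1 a) + d (pr0 a) := by
      conv_lhs => rw [← hprsum a]
      rw [map_add, add_comm]
    constructor
    · rw [hda, huniq0 _ _ (hd10 _ (hpr1mem a)) (hd01 _ (hpr0mem a))]
      exact ⟨pr1 a, rfl⟩
    · rw [hda, huniq1 _ _ (hd10 _ (hpr1mem a)) (hd01 _ (hpr0mem a))]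
      exact ⟨pr0 a, rfl⟩
  -- L is isotropic
  have hisoL : ∀ x ∈ L, ∀ y ∈ L, B x y = 0 := by
    rintro x ⟨a, rfl⟩ y ⟨b, rfl⟩
    have h0 : B (d (pr0 a)) (d b) = 0 := by
      have := hBd0 (pr0 a) (hpr0mem a) (d b)
      rw [hd2' b, map_zero, add_zero] at this
      exact this
    have h1 : B (d (pr1 a)) (d b) = 0 := by
      have := hBd1 (pr1 a) (hpr1mem a) (d b)
      rw [hd2' b, map_zero, sub_zero] at this
      exact this
    have hda : d a = d (pr0 a) + d (pr1 a) := by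
      conv_lhs => rw [← hprsum a]
      rw [map_add]
    rw [hda, map_add, LinearMap.add_apply, h0, h1, add_zero]
  -- graded complement W of L
  obtain ⟨p0, hp0⟩ := Submodule.exists_isCompl (Submodule.comap V0.subtype (L ⊓ V0))
  obtain ⟨p1, hp1⟩ := Submodule.exists_isCompl (Submodule.comap V1.subtype (L ⊓ V1))
  set W0 : Submodule k V := Submodule.map V0.subtype p0 with hW0def
  set W1 : Submodule k V := Submodule.map V1.subtype p1 with hW1def
  have hW0le : W0 ≤ V0 := Submodule.map_subtype_le V0 p0
  have hW1le : W1 ≤ V1 := Submodule.map_subtype_le V1 p1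
  have hW0sup : (L ⊓ V0) ⊔ W0 = V0 := by
    have h := congrArg (Submodule.map V0.subtype) (codisjoint_iff.1 hp0.codisjoint)
    rw [Submodule.map_sup, Submodule.map_comap_subtype, Submodule.map_top,
      Submodule.range_subtype, inf_eq_right.2 inf_le_right] at h
    exact h
  have hW1sup : (L ⊓ V1) ⊔ W1 = V1 := by
    have h := congrArg (Submodule.map V1.subtype) (codisjoint_iff.1 hp1.codisjoint)
    rw [Submodule.map_sup, Submodule.map_comap_subtype, Submodule.map_top,
      Submodule.range_subtype, inf_eq_right.2 inf_le_right] at h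
    exact h
  have hW0disj : ∀ x, x ∈ L → x ∈ W0 → x = 0 := by
    intro x hxL hxW
    obtain ⟨y, hyp, rfl⟩ := Submodule.mem_map.1 hxW
    have hy : y ∈ Submodule.comap V0.subtype (L ⊓ V0) := by
      simp only [Submodule.mem_comap, Submodule.mem_inf]
      exact ⟨hxL, Submodule.coe_mem y⟩
    have : y = 0 := Submodule.disjoint_def.1 hp0.disjoint y hy hyp
    simp [this]
  have hW1disj : ∀ x, x ∈ L → x ∈ W1 → x = 0 := by
    intro x hxL hxW
    obtain ⟨y, hyp, rfl⟩ := Submodule.mem_map.1 hxW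
    have hy : y ∈ Submodule.comap V1.subtype (L ⊓ V1) := by
      simp only [Submodule.mem_comap, Submodule.mem_inf]
      exact ⟨hxL, Submodule.coe_mem y⟩
    have : y = 0 := Submodule.disjoint_def.1 hp1.disjoint y hy hyp
    simp [this]
  set W : Submodule k V := W0 ⊔ W1 with hWdef
  have hW0W : W0 ≤ W := le_sup_left
  have hW1W : W1 ≤ W := le_sup_right
  -- W is graded
  have hWgr : ∀ v ∈ W, pr0 v ∈ W0 ∧ pr1 v ∈ W1 := by
    intro v hv
    obtain ⟨a, ha, b, hb, rfl⟩ := Submodule.mem_sup.1 hv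
    rw [huniq0 a b (hW0le ha) (hW1le hb), huniq1 a b (hW0le ha) (hW1le hb)]
    exact ⟨ha, hb⟩
  -- L and W are complementary
  have hsupLW : L ⊔ W = ⊤ := by
    rw [eq_top_iff, ← codisjoint_iff.1 hgr.codisjoint]
    apply sup_le
    · rw [← hW0sup]
      exact sup_le (inf_le_left.trans le_sup_left) (hW0W.trans le_sup_right)
    · rw [← hW1sup]
      exact sup_le (inf_le_left.trans le_sup_left) (hW1W.trans le_sup_right)
  have hdisjLW : Disjoint L W := by
    rw [Submodule.disjoint_def]
    intro x hxL hxW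
    have h0 : pr0 x = 0 := hW0disj _ (hLgr x hxL).1 (hWgr x hxW).1
    have h1 : pr1 x = 0 := hW1disj _ (hLgr x hxL).2 (hWgr x hxW).2
    rw [← hprsum x, h0, h1, add_zero]
  have hcompl : IsCompl L W := ⟨hdisjLW, codisjoint_iff.2 hsupLW⟩
  -- projection onto W along L
  set piW : V →ₗ[k] V :=
    W.subtype ∘ₗ Submodule.linearProjOfIsCompl W L hcompl.symm with hpiWdef
  have hpiWmem : ∀ v, piW v ∈ W := fun v => Submodule.coe_mem _
  have hpiWleft : ∀ x ∈ W, piW x = x := by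
    intro x hx
    exact congrArg Subtype.val
      (Submodule.linearProjOfIsCompl_apply_left hcompl.symm ⟨x, hx⟩)
  have hpiWright : ∀ x ∈ L, piW x = 0 := by
    intro x hx
    rw [hpiWdef]
    exact congrArg Subtype.val (Submodule.linearProjOfIsCompl_apply_right' hcompl.symm hx)
  have hpiWsub : ∀ v, v - piW v ∈ L := by
    intro v
    have h : ((Submodule.linearProjOfIsCompl W L hcompl.symm) v : V) +
        ((Submodule.linearProjOfIsCompl L W hcompl.symm.symm) v : V) = v :=
      Submodule.projection_add_projection_eq_self hcompl.symm v
    have : v - piW v = ((Submodule.linearProjOfIsCompl L W hcompl.symm.symm) v : V) := by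
      rw [hpiWdef]
      conv_lhs => rw [← h]
      have e1 : ((Submodule.linearProjOfIsCompl W L hcompl.symm)
          ((Submodule.linearProjOfIsCompl W L hcompl.symm) v : V) : V) =
          ((Submodule.linearProjOfIsCompl W L hcompl.symm) v : V) := hpiWleft _ (hpiWmem v)
      have e2 : ((Submodule.linearProjOfIsCompl W L hcompl.symm)
          ((Submodule.linearProjOfIsCompl L W hcompl.symm.symm) v : V) : V) = 0 :=
        hpiWright _ (Submodule.coe_mem _)
      simp [e1, e2]
    rw [this]
    exact Submodule.coe_mem _
  -- dimensions
  have hrk := LinearMap.finrank_range_add_finrank_ker d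
  rw [hacyclic, ← hLdef] at hrk
  have hdimW : Module.finrank k W = Module.finrank k L := by
    have h := Submodule.finrank_sup_add_finrank_inf_eq L W
    rw [hsupLW, disjoint_iff.1 hdisjLW, finrank_top, finrank_bot, add_zero] at h
    omega
  -- the defining functional system for U
  set R : V →ₗ[k] (W →ₗ[k] k) := (B.flip.domRestrict W).flip with hRdef
  set Psi : V →ₗ[k] (W →ₗ[k] k) := (2 : k) • R - R ∘ₗ piW with hPsidef
  have hPsiapp : ∀ v (x : W), Psi v x = 2 * B v x - B (piW v) x := by
    intro v x
    rw [hPsidef, hRdef]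
    simp [smul_eq_mul]
  set U : Submodule k V := LinearMap.ker Psi with hUdef
  have hmemU : ∀ v, v ∈ U ↔ ∀ x ∈ W, 2 * B v x = B (piW v) x := by
    intro v
    rw [hUdef, LinearMap.mem_ker]
    constructor
    · intro hv x hx
      have h := LinearMap.congr_fun hv (⟨x, hx⟩ : W)
      rw [hPsiapp] at h
      simp only [LinearMap.zero_apply] at h
      have : 2 * B v x - B (piW v) x = 0 := h
      linear_combination this
    · intro h
      apply LinearMap.ext
      rintro ⟨x, hx⟩
      rw [hPsiapp]
      simp only [LinearMap.zero_apply]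
      linear_combination h x hx
  -- disjointness of L and U
  have hdisjLU : Disjoint L U := by
    rw [Submodule.disjoint_def]
    intro x hxL hxU
    by_contra hxne
    obtain ⟨y, hy⟩ := hnd x hxne
    apply hy
    have hzW : ∀ z ∈ W, B x z = 0 := by
      intro z hz
      have h := (hmemU x).1 hxU z hz
      rw [hpiWright x hxL, map_zero, LinearMap.zero_apply] at h
      have h2 : (2 : k) ≠ 0 := by norm_num
      exact (mul_eq_zero.1 h).resolve_left h2
    have h1 : B x (piW y) = 0 := hzW _ (hpiWmem y)
    have h2 : B x (y - piW y) = 0 := hisoL x hxL _ (hpiWsub y)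
    have : B x y = B x (piW y) + B x (y - piW y) := by
      rw [← map_add]
      congr 1
      abel
    rw [this, h1, h2, add_zero]
  -- dimension count: L ⊔ U = ⊤
  have hsupLU : L ⊔ U = ⊤ := by
    have h1 := LinearMap.finrank_range_add_finrank_ker Psi
    have h2 : Module.finrank k (LinearMap.range Psi) ≤ Module.finrank k W := by
      have h3 := Submodule.finrank_le (LinearMap.range Psi)
      rwa [Module.finrank_linearMap, Module.finrank_self, mul_one] at h3
    have h4 := Submodule.finrank_sup_add_finrank_inf_eq L U
    rw [disjoint_iff.1 hdisjLU, finrank_bot, add_zero] at h4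
    have h5 := Submodule.finrank_le (L ⊔ U)
    have hULker : Module.finrank k U = Module.finrank k (LinearMap.ker Psi) := rfl
    apply Submodule.eq_top_of_finrank_eq
    omega
  -- splitting of B along the grading
  have hBsplitL : ∀ v y : V, B v y = B (pr0 v) y + B (pr1 v) y := by
    intro v y
    conv_lhs => rw [← hprsum v]
    rw [map_add, LinearMap.add_apply]
  have hBsplitR : ∀ v y : V, B v y = B v (pr0 y) + B v (pr1 y) := by
    intro v y
    conv_lhs => rw [← hprsum y]
    rw [map_add]
  have he2 : ε * ε = 1 := by rcases hε with h | h <;> rw [h] <;> norm_num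
  -- the key symmetry lemma
  have hkey : ∀ w ∈ W, ∀ w' ∈ W, ∀ l ∈ L, (∀ x ∈ W, 2 * B l x = -(B w' x)) →
      2 * B w l = -(B w w') := by
    intro w hw w' hw' l hl hcond
    have hw0W : pr0 w ∈ W := hW0W (hWgr w hw).1
    have hw1W : pr1 w ∈ W := hW1W (hWgr w hw).2
    have swl : B w l = B (pr0 w) (pr0 l) + B (pr0 w) (pr1 l)
        + B (pr1 w) (pr0 l) + B (pr1 w) (pr1 l) := by
      rw [hBsplitL w l, hBsplitR (pr0 w) l, hBsplitR (pr1 w) l]; ring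
    have sww : B w w' = B (pr0 w) (pr0 w') + B (pr0 w) (pr1 w')
        + B (pr1 w) (pr0 w') + B (pr1 w) (pr1 w') := by
      rw [hBsplitL w w', hBsplitR (pr0 w) w', hBsplitR (pr1 w) w']; ring
    rcases hhom with ⟨he0, he1⟩ | ⟨ho0, ho1⟩
    · -- even case
      have z1 : B (pr0 w) (pr1 l) = 0 := he0 _ (hpr0mem w) _ (hpr1mem l)
      have z2 : B (pr1 w) (pr0 l) = 0 := he1 _ (hpr1mem w) _ (hpr0mem l)
      have z3 : B (pr0 w) (pr1 w') = 0 := he0 _ (hpr0mem w) _ (hpr1mem w')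
      have z4 : B (pr1 w) (pr0 w') = 0 := he1 _ (hpr1mem w) _ (hpr0mem w')
      have e1 : 2 * B (pr0 w) (pr0 l) = -(B (pr0 w) (pr0 w')) := by
        have h1 : B (pr0 w) (pr0 l) = ε * B (pr0 l) (pr0 w) := hsym0 _ (hpr0mem w) _
        have h2 : B l (pr0 w) = B (pr0 l) (pr0 w) + B (pr1 l) (pr0 w) := hBsplitL l (pr0 w)
        have h2' : B (pr1 l) (pr0 w) = 0 := he1 _ (hpr1mem l) _ (hpr0mem w)
        have h3 : 2 * B l (pr0 w) = -(B w' (pr0 w)) := hcond _ hw0W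
        have h4 : B w' (pr0 w) = B (pr0 w') (pr0 w) + B (pr1 w') (pr0 w) := hBsplitL w' (pr0 w)
        have h4' : B (pr1 w') (pr0 w) = 0 := he1 _ (hpr1mem w') _ (hpr0mem w)
        have h5 : B (pr0 w') (pr0 w) = ε * B (pr0 w) (pr0 w') := hsym0 _ (hpr0mem w') _
        calc 2 * B (pr0 w) (pr0 l) = 2 * (ε * B (pr0 l) (pr0 w)) := by rw [h1]
          _ = ε * (2 * B l (pr0 w)) := by rw [h2, h2', add_zero]; ring
          _ = ε * (-(B w' (pr0 w))) := by rw [h3]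
          _ = ε * (-(B (pr0 w') (pr0 w))) := by rw [h4, h4', add_zero]
          _ = -((ε * ε) * B (pr0 w) (pr0 w')) := by rw [h5]; ring
          _ = -(B (pr0 w) (pr0 w')) := by rw [he2, one_mul]
      have e2 : 2 * B (pr1 w) (pr1 l) = -(B (pr1 w) (pr1 w')) := by
        have h1 : B (pr1 w) (pr1 l) = -ε * B (pr1 l) (pr1 w) :=
          hsym11 _ (hpr1mem w) _ (hpr1mem l)
        have h2 : B l (pr1 w) = B (pr0 l) (pr1 w) + B (pr1 l) (pr1 w) := hBsplitL l (pr1 w)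
        have h2' : B (pr0 l) (pr1 w) = 0 := he0 _ (hpr0mem l) _ (hpr1mem w)
        have h3 : 2 * B l (pr1 w) = -(B w' (pr1 w)) := hcond _ hw1W
        have h4 : B w' (pr1 w) = B (pr0 w') (pr1 w) + B (pr1 w') (pr1 w) := hBsplitL w' (pr1 w)
        have h4' : B (pr0 w') (pr1 w) = 0 := he0 _ (hpr0mem w') _ (hpr1mem w)
        have h5 : B (pr1 w') (pr1 w) = -ε * B (pr1 w) (pr1 w') :=
          hsym11 _ (hpr1mem w') _ (hpr1mem w)
        calc 2 * B (pr1 w) (pr1 l) = 2 * (-ε * B (pr1 l) (pr1 w)) := by rw [h1]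
          _ = -ε * (2 * B l (pr1 w)) := by rw [h2, h2', zero_add]; ring
          _ = -ε * (-(B w' (pr1 w))) := by rw [h3]
          _ = -ε * (-(B (pr1 w') (pr1 w))) := by rw [h4, h4', zero_add]
          _ = -((ε * ε) * B (pr1 w) (pr1 w')) := by rw [h5]; ring
          _ = -(B (pr1 w) (pr1 w')) := by rw [he2, one_mul]
      rw [swl, sww, z1, z2, z3, z4]
      linear_combination e1 + e2
    · -- odd case
      have z1 : B (pr0 w) (pr0 l) = 0 := ho0 _ (hpr0mem w) _ (hpr0mem l)
      have z2 : B (pr1 w) (pr1 l) = 0 := ho1 _ (hpr1mem w) _ (hpr1mem l)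
      have z3 : B (pr0 w) (pr0 w') = 0 := ho0 _ (hpr0mem w) _ (hpr0mem w')
      have z4 : B (pr1 w) (pr1 w') = 0 := ho1 _ (hpr1mem w) _ (hpr1mem w')
      have o1 : 2 * B (pr0 w) (pr1 l) = -(B (pr0 w) (pr1 w')) := by
        have h1 : B (pr0 w) (pr1 l) = ε * B (pr1 l) (pr0 w) := hsym0 _ (hpr0mem w) _
        have h2 : B l (pr0 w) = B (pr0 l) (pr0 w) + B (pr1 l) (pr0 w) := hBsplitL l (pr0 w)
        have h2' : B (pr0 l) (pr0 w) = 0 := ho0 _ (hpr0mem l) _ (hpr0mem w)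
        have h3 : 2 * B l (pr0 w) = -(B w' (pr0 w)) := hcond _ hw0W
        have h4 : B w' (pr0 w) = B (pr0 w') (pr0 w) + B (pr1 w') (pr0 w) := hBsplitL w' (pr0 w)
        have h4' : B (pr0 w') (pr0 w) = 0 := ho0 _ (hpr0mem w') _ (hpr0mem w)
        have h5 : B (pr1 w') (pr0 w) = ε * B (pr0 w) (pr1 w') :=
          hsym10 _ (hpr1mem w') _ (hpr0mem w)
        calc 2 * B (pr0 w) (pr1 l) = 2 * (ε * B (pr1 l) (pr0 w)) := by rw [h1]
          _ = ε * (2 * B l (pr0 w)) := by rw [h2, h2', zero_add]; ring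
          _ = ε * (-(B w' (pr0 w))) := by rw [h3]
          _ = ε * (-(B (pr1 w') (pr0 w))) := by rw [h4, h4', zero_add]
          _ = -((ε * ε) * B (pr0 w) (pr1 w')) := by rw [h5]; ring
          _ = -(B (pr0 w) (pr1 w')) := by rw [he2, one_mul]
      have o2 : 2 * B (pr1 w) (pr0 l) = -(B (pr1 w) (pr0 w')) := by
        have h1 : B (pr1 w) (pr0 l) = ε * B (pr0 l) (pr1 w) :=
          hsym10 _ (hpr1mem w) _ (hpr0mem l)
        have h2 : B l (pr1 w) = B (pr0 l) (pr1 w) + B (pr1 l) (pr1 w) := hBsplitL l (pr1 w)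
        have h2' : B (pr1 l) (pr1 w) = 0 := ho1 _ (hpr1mem l) _ (hpr1mem w)
        have h3 : 2 * B l (pr1 w) = -(B w' (pr1 w)) := hcond _ hw1W
        have h4 : B w' (pr1 w) = B (pr0 w') (pr1 w) + B (pr1 w') (pr1 w) := hBsplitL w' (pr1 w)
        have h4' : B (pr1 w') (pr1 w) = 0 := ho1 _ (hpr1mem w') _ (hpr1mem w)
        have h5 : B (pr0 w') (pr1 w) = ε * B (pr1 w) (pr0 w') := hsym0 _ (hpr0mem w') _
        calc 2 * B (pr1 w) (pr0 l) = 2 * (ε * B (pr0 l) (pr1 w)) := by rw [h1]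
          _ = ε * (2 * B l (pr1 w)) := by rw [h2, h2', add_zero]; ring
          _ = ε * (-(B w' (pr1 w))) := by rw [h3]
          _ = ε * (-(B (pr0 w') (pr1 w))) := by rw [h4, h4', add_zero]
          _ = -((ε * ε) * B (pr1 w) (pr0 w')) := by rw [h5]; ring
          _ = -(B (pr1 w) (pr0 w')) := by rw [he2, one_mul]
      rw [swl, sww, z1, z2, z3, z4]
      linear_combination o1 + o2
  -- U is isotropic
  have hisoU : ∀ u ∈ U, ∀ u' ∈ U, B u u' = 0 := by
    intro u hu u' hu'
    have hcond' : ∀ x ∈ W, 2 * B (u' - piW u') x = -(B (piW u') x) := by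
      intro x hx
      have h := (hmemU u').1 hu' x hx
      have hx2 : B (u' - piW u') x = B u' x - B (piW u') x := by
        rw [map_sub, LinearMap.sub_apply]
      linear_combination 2 * hx2 + h
    have h1 : 2 * B (piW u) (u' - piW u') = -(B (piW u) (piW u')) :=
      hkey _ (hpiWmem u) _ (hpiWmem u') _ (hpiWsub u') hcond'
    have h2 : 2 * B (u - piW u) (piW u') = -(B (piW u) (piW u')) := by
      have h := (hmemU u).1 hu (piW u') (hpiWmem u')
      have hx2 : B (u - piW u) (piW u') = B u (piW u') - B (piW u) (piW u') := by
        rw [map_sub, LinearMap.sub_apply]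
      linear_combination 2 * hx2 + h
    have h3 : B (u - piW u) (u' - piW u') = 0 := hisoL _ (hpiWsub u) _ (hpiWsub u')
    have expand : B u u' = B (piW u) (piW u') + B (piW u) (u' - piW u')
        + B (u - piW u) (piW u') + B (u - piW u) (u' - piW u') := by
      simp only [map_sub, LinearMap.sub_apply]
      ring
    have h4 : (2 : k) * B u u' = 0 := by
      rw [expand]
      linear_combination h1 + h2 + 2 * h3
    have h2' : (2 : k) ≠ 0 := by norm_num
    exact (mul_eq_zero.1 h4).resolve_left h2'
  -- piW commutes with the grading projections
  have hcomm0 : ∀ v, piW (pr0 v) = pr0 (piW v) := by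
    intro v
    have hsplit : pr0 v = pr0 (piW v) + pr0 (v - piW v) := by
      have h : pr0 (piW v + (v - piW v)) = pr0 (piW v) + pr0 (v - piW v) := by
        rw [hpr0def]; simp [map_add]
      rw [← h]
      congr 1
      abel
    rw [hsplit, map_add, hpiWleft _ (hW0W (hWgr _ (hpiWmem v)).1),
      hpiWright _ (hLgr _ (hpiWsub v)).1, add_zero]
  have hcomm1 : ∀ v, piW (pr1 v) = pr1 (piW v) := by
    intro v
    have hsplit : pr1 v = pr1 (piW v) + pr1 (v - piW v) := by
      have h : pr1 (piW v + (v - piW v)) = pr1 (piW v) + pr1 (v - piW v) := by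
        rw [hpr1def]; simp [map_add]
      rw [← h]
      congr 1
      abel
    rw [hsplit, map_add, hpiWleft _ (hW1W (hWgr _ (hpiWmem v)).2),
      hpiWright _ (hLgr _ (hpiWsub v)).2, add_zero]
  -- U is graded
  have hpr0U : ∀ u ∈ U, pr0 u ∈ U := by
    intro u hu
    rw [hmemU]
    intro x hx
    rw [hcomm0 u]
    have hx0W : pr0 x ∈ W := hW0W (hWgr x hx).1
    have hx1W : pr1 x ∈ W := hW1W (hWgr x hx).2
    rcases hhom with ⟨he0, he1⟩ | ⟨ho0, ho1⟩
    · have t0 : 2 * B u (pr0 x) = B (piW u) (pr0 x) := (hmemU u).1 hu _ hx0W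
      have l1 : B u (pr0 x) = B (pr0 u) (pr0 x) + B (pr1 u) (pr0 x) := hBsplitL u (pr0 x)
      have l1' : B (pr1 u) (pr0 x) = 0 := he1 _ (hpr1mem u) _ (hpr0mem x)
      have l2 : B (piW u) (pr0 x)
          = B (pr0 (piW u)) (pr0 x) + B (pr1 (piW u)) (pr0 x) := hBsplitL _ _
      have l2' : B (pr1 (piW u)) (pr0 x) = 0 := he1 _ (hpr1mem _) _ (hpr0mem x)
      have r1 : B (pr0 u) x = B (pr0 u) (pr0 x) + B (pr0 u) (pr1 x) := hBsplitR _ x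
      have r1' : B (pr0 u) (pr1 x) = 0 := he0 _ (hpr0mem u) _ (hpr1mem x)
      have r2 : B (pr0 (piW u)) x
          = B (pr0 (piW u)) (pr0 x) + B (pr0 (piW u)) (pr1 x) := hBsplitR _ x
      have r2' : B (pr0 (piW u)) (pr1 x) = 0 := he0 _ (hpr0mem _) _ (hpr1mem x)
      linear_combination 2 * r1 - 2 * l1 + t0 + l2 - r2 + 2 * r1' - 2 * l1' + l2' - r2'
    · have t0 : 2 * B u (pr1 x) = B (piW u) (pr1 x) := (hmemU u).1 hu _ hx1W
      have l1 : B u (pr1 x) = B (pr0 u) (pr1 x) + B (pr1 u) (pr1 x) := hBsplitL u (pr1 x)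
      have l1' : B (pr1 u) (pr1 x) = 0 := ho1 _ (hpr1mem u) _ (hpr1mem x)
      have l2 : B (piW u) (pr1 x)
          = B (pr0 (piW u)) (pr1 x) + B (pr1 (piW u)) (pr1 x) := hBsplitL _ _
      have l2' : B (pr1 (piW u)) (pr1 x) = 0 := ho1 _ (hpr1mem _) _ (hpr1mem x)
      have r1 : B (pr0 u) x = B (pr0 u) (pr0 x) + B (pr0 u) (pr1 x) := hBsplitR _ x
      have r1' : B (pr0 u) (pr0 x) = 0 := ho0 _ (hpr0mem u) _ (hpr0mem x)
      have r2 : B (pr0 (piW u)) x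
          = B (pr0 (piW u)) (pr0 x) + B (pr0 (piW u)) (pr1 x) := hBsplitR _ x
      have r2' : B (pr0 (piW u)) (pr0 x) = 0 := ho0 _ (hpr0mem _) _ (hpr0mem x)
      linear_combination 2 * r1 - 2 * l1 + t0 + l2 - r2 + 2 * r1' - 2 * l1' + l2' - r2'
  have hpr1U : ∀ u ∈ U, pr1 u ∈ U := by
    intro u hu
    rw [hmemU]
    intro x hx
    rw [hcomm1 u]
    have hx0W : pr0 x ∈ W := hW0W (hWgr x hx).1
    have hx1W : pr1 x ∈ W := hW1W (hWgr x hx).2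
    rcases hhom with ⟨he0, he1⟩ | ⟨ho0, ho1⟩
    · have t0 : 2 * B u (pr1 x) = B (piW u) (pr1 x) := (hmemU u).1 hu _ hx1W
      have l1 : B u (pr1 x) = B (pr0 u) (pr1 x) + B (pr1 u) (pr1 x) := hBsplitL u (pr1 x)
      have l1' : B (pr0 u) (pr1 x) = 0 := he0 _ (hpr0mem u) _ (hpr1mem x)
      have l2 : B (piW u) (pr1 x)
          = B (pr0 (piW u)) (pr1 x) + B (pr1 (piW u)) (pr1 x) := hBsplitL _ _
      have l2' : B (pr0 (piW u)) (pr1 x) = 0 := he0 _ (hpr0mem _) _ (hpr1mem x)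
      have r1 : B (pr1 u) x = B (pr1 u) (pr0 x) + B (pr1 u) (pr1 x) := hBsplitR _ x
      have r1' : B (pr1 u) (pr0 x) = 0 := he1 _ (hpr1mem u) _ (hpr0mem x)
      have r2 : B (pr1 (piW u)) x
          = B (pr1 (piW u)) (pr0 x) + B (pr1 (piW u)) (pr1 x) := hBsplitR _ x
      have r2' : B (pr1 (piW u)) (pr0 x) = 0 := he1 _ (hpr1mem _) _ (hpr0mem x)
      linear_combination 2 * r1 - 2 * l1 + t0 + l2 - r2 + 2 * r1' - 2 * l1' + l2' - r2'
    · have t0 : 2 * B u (pr0 x) = B (piW u) (pr0 x) := (hmemU u).1 hu _ hx0W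
      have l1 : B u (pr0 x) = B (pr0 u) (pr0 x) + B (pr1 u) (pr0 x) := hBsplitL u (pr0 x)
      have l1' : B (pr0 u) (pr0 x) = 0 := ho0 _ (hpr0mem u) _ (hpr0mem x)
      have l2 : B (piW u) (pr0 x)
          = B (pr0 (piW u)) (pr0 x) + B (pr1 (piW u)) (pr0 x) := hBsplitL _ _
      have l2' : B (pr0 (piW u)) (pr0 x) = 0 := ho0 _ (hpr0mem _) _ (hpr0mem x)
      have r1 : B (pr1 u) x = B (pr1 u) (pr0 x) + B (pr1 u) (pr1 x) := hBsplitR _ x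
      have r1' : B (pr1 u) (pr1 x) = 0 := ho1 _ (hpr1mem u) _ (hpr1mem x)
      have r2 : B (pr1 (piW u)) x
          = B (pr1 (piW u)) (pr0 x) + B (pr1 (piW u)) (pr1 x) := hBsplitR _ x
      have r2' : B (pr1 (piW u)) (pr1 x) = 0 := ho1 _ (hpr1mem _) _ (hpr1mem x)
      linear_combination 2 * r1 - 2 * l1 + t0 + l2 - r2 + 2 * r1' - 2 * l1' + l2' - r2'
  refine ⟨U, ?_, hsupLU, hdisjLU, hisoU⟩
  apply le_antisymm
  · intro u hu
    have h0 := hpr0U u hu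
    have h1 := hpr1U u hu
    have : pr0 u + pr1 u ∈ (U ⊓ V0) ⊔ (U ⊓ V1) :=
      Submodule.add_mem_sup (Submodule.mem_inf.2 ⟨h0, hpr0mem u⟩)
        (Submodule.mem_inf.2 ⟨h1, hpr1mem u⟩)
    rwa [hprsum u] at this
  · exact sup_le inf_le_left inf_le_left
end
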